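/- Let (V,b) be a finite weighted graph with N = 2K vertices (K ≥ 1), at least one edge, and no isolated vertices. Then the dual Cheeger constant satisfies h̄ ≥ N/(2(N−1)). -/

import Mathlib

open Finset


lemma choose_id (m : ℕ) : (m+1) * (2*m+2).choose (m+1) = 2*(2*m+1) * (2*m).choose m := by
  have h1 : (2*m+2) * (2*m+1).choose m = (2*m+2).choose (m+1) * (m+1) := by
    have := Nat.add_one_mul_choose_eq (2*m+1) m
    simpa [show 2*m+1+1 = 2*m+2 by omega] using this
  have h2 : (2*m+1).choose m = (2*m+1).choose (m+1) := by
    have := Nat.choose_symm (show m+1 ≤ 2*m+1 by omega)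
    simpa [show 2*m+1-(m+1) = m by omega] using this
  have h3 : (2*m+1) * (2*m).choose m = (2*m+1).choose (m+1) * (m+1) := by
    have := Nat.add_one_mul_choose_eq (2*m) m
    simpa [show 2*m+1 = 2*m+1 by omega] using this
  apply Nat.eq_of_mul_eq_mul_left (show 0 < m+1 by omega)
  calc (m+1) * ((m+1) * (2*m+2).choose (m+1))
      = (m+1) * ((2*m+2).choose (m+1) * (m+1)) := by ring
    _ = (m+1) * ((2*m+2) * (2*m+1).choose m) := by rw [h1]
    _ = (2*m+2) * ((2*m+1).choose (m+1) * (m+1)) := by rw [h2]; ring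
    _ = (2*m+2) * ((2*m+1) * (2*m).choose m) := by rw [h3]
    _ = (m+1) * (2*(2*m+1) * (2*m).choose m) := by ring

lemma count_sep {V : Type*} [Fintype V] [DecidableEq V] (x y : V) (hxy : x ≠ y) (K : ℕ) (hK : 1 ≤ K) :
    ((powersetCard K (univ : Finset V)).filter (fun S => x ∈ S ∧ y ∉ S)).card
      = (Fintype.card V - 2).choose (K - 1) := by
  have hc : (((univ : Finset V).erase x).erase y).card = Fintype.card V - 2 := by
    rw [card_erase_of_mem, card_erase_of_mem] <;>
      simp [Finset.mem_erase, hxy.symm, Finset.card_univ]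
    omega
  rw [← hc, ← Finset.card_powersetCard]
  refine Finset.card_bij' (fun S _ => S.erase x) (fun T _ => insert x T) ?hi ?hj ?li ?ri
  case hi =>
    intro S hS
    simp only [mem_filter, mem_powersetCard] at hS
    obtain ⟨⟨_, hcard⟩, hx, hy⟩ := hS
    rw [mem_powersetCard]
    constructor
    · intro z hz
      simp only [mem_erase] at hz ⊢
      refine ⟨?_, hz.1, mem_univ z⟩
      rintro rfl; exact hy hz.2
    · rw [card_erase_of_mem hx, hcard]
  case hj =>
    intro T hT
    rw [mem_powersetCard] at hT
    obtain ⟨hsub, hcard⟩ := hT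
    have hxT : x ∉ T := fun h => by
      have := hsub h; simp [mem_erase] at this
    simp only [mem_filter, mem_powersetCard]
    refine ⟨⟨subset_univ _, ?_⟩, mem_insert_self _ _, ?_⟩
    · rw [card_insert_of_notMem hxT, hcard]; omega
    · intro h
      rcases mem_insert.1 h with h | h
      · exact hxy h.symm
      · have := hsub h; simp [mem_erase] at this
  case li =>
    intro S hS
    simp only [mem_filter] at hS
    exact insert_erase hS.2.1
  case ri =>
    intro T hT
    rw [mem_powersetCard] at hT
    have hxT : x ∉ T := fun h => by
      have := hT.1 h; simp [mem_erase] at this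
    exact erase_insert hxT
lemma double_count {V : Type*} [Fintype V] [DecidableEq V] {F : Type*} [Field F] [LinearOrder F] [IsStrictOrderedRing F]
    (b : V → V → F) (hloop : ∀ x, b x x = 0) (K : ℕ) (hK : 1 ≤ K) :
    ∑ S ∈ powersetCard K (univ : Finset V), ∑ x ∈ S, ∑ y ∈ univ \ S, b x y
      = ((Fintype.card V - 2).choose (K - 1) : F) * ∑ x, ∑ y, b x y := by
  have h1 : ∀ S : Finset V, ∑ x ∈ S, ∑ y ∈ univ \ S, b x y
      = ∑ x : V, ∑ y : V, if x ∈ S ∧ y ∉ S then b x y else 0 := by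
    intro S
    calc ∑ x ∈ S, ∑ y ∈ univ \ S, b x y
        = ∑ x ∈ univ ∩ S, ∑ y ∈ univ \ S, b x y := by rw [univ_inter]
      _ = ∑ x : V, if x ∈ S then ∑ y ∈ univ \ S, b x y else 0 :=
          (Finset.sum_ite_mem _ _ _).symm
      _ = ∑ x : V, ∑ y : V, if x ∈ S ∧ y ∉ S then b x y else 0 := by
          refine Finset.sum_congr rfl fun x _ => ?_
          by_cases hx : x ∈ S
          · simp only [hx, if_true, true_and]
            rw [show (univ \ S : Finset V) = univ.filter (fun y => y ∉ S) from by ext; simp,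
              Finset.sum_filter]
          · simp [hx]
  simp only [h1]
  rw [Finset.sum_comm, Finset.mul_sum]
  refine Finset.sum_congr rfl fun x _ => ?_
  rw [Finset.sum_comm, Finset.mul_sum]
  refine Finset.sum_congr rfl fun y _ => ?_
  rw [← Finset.sum_filter, Finset.sum_const, nsmul_eq_mul]
  by_cases hxy : x = y
  · subst hxy; simp [hloop]
  · rw [count_sep x y hxy K hK, mul_comm]
theorem dual_cheeger_lower_bound_even
    {V : Type*} [Fintype V] [DecidableEq V] {F : Type*} [Field F] [LinearOrder F] [IsStrictOrderedRing F]
    (b : V → V → F)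
    (hsymm : ∀ x y, b x y = b y x)
    (hnn : ∀ x y, 0 ≤ b x y)
    (hloop : ∀ x, b x x = 0)
    (hiso : ∀ x, 0 < ∑ y, b x y)
    (K N : ℕ) (hK : 1 ≤ K) (hN : N = 2 * K)
    (hcard : Fintype.card V = N)
    (hedge : ∃ x y, 0 < b x y)
    (hbar : F)
    (hmax : IsGreatest {r : F | ∃ V1 V2 : Finset V, V1.Nonempty ∧ V2.Nonempty ∧
      Disjoint V1 V2 ∧
      r = 2 * (∑ x ∈ V1, ∑ y ∈ V2, b x y) /
        ((∑ x ∈ V1, ∑ y, b x y) + (∑ x ∈ V2, ∑ y, b x y))} hbar) :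
    (N : F) / (2 * ((N : F) - 1)) ≤ hbar := by
  obtain ⟨m, rfl⟩ : ∃ m, K = m + 1 := ⟨K - 1, by omega⟩
  subst hN
  set K := m + 1 with hKdef
  set vol : F := ∑ x, ∑ y, b x y with hvol
  have hvolpos : 0 < vol := by
    apply Finset.sum_pos (fun x _ => hiso x)
    rw [← Finset.card_pos, Finset.card_univ, hcard]; omega
  set PS := powersetCard K (univ : Finset V) with hPS
  have hPScard : PS.card = (2 * K).choose K := by
    rw [hPS, Finset.card_powersetCard, Finset.card_univ, hcard]
  have hPSne : PS.Nonempty := by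
    rw [← Finset.card_pos, hPScard]
    exact Nat.choose_pos (by omega)
  set c1 : F := ((2 * m).choose m : F) with hc1
  set c2 : F := ((2 * K).choose K : F) with hc2
  have hc2pos : 0 < c2 := by
    rw [hc2]; exact_mod_cast Nat.choose_pos (show K ≤ 2 * K by omega)
  -- the double count
  have hdc : ∑ S ∈ PS, ∑ x ∈ S, ∑ y ∈ univ \ S, b x y = c1 * vol := by
    rw [hPS, double_count b hloop K (by omega)]
    congr 2
    rw [hcard]
    congr 1 <;> omega
  -- averaging
  have havg : ∃ S ∈ PS, c1 * vol ≤ c2 * ∑ x ∈ S, ∑ y ∈ univ \ S, b x y := by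
    apply Finset.exists_le_of_sum_le hPSne
    rw [Finset.sum_const, nsmul_eq_mul, hPScard, ← hc2, ← Finset.mul_sum, hdc]
  obtain ⟨S, hSPS, hSavg⟩ := havg
  rw [hPS, Finset.mem_powersetCard] at hSPS
  obtain ⟨-, hScard⟩ := hSPS
  set fS : F := ∑ x ∈ S, ∑ y ∈ univ \ S, b x y with hfS
  -- facts about S
  have hSne : S.Nonempty := by rw [← Finset.card_pos, hScard]; omega
  have hScne : (univ \ S).Nonempty := by
    rw [← Finset.card_pos, Finset.card_sdiff_of_subset (Finset.subset_univ S), Finset.card_univ, hcard,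
      hScard]
    omega
  have hdisj : Disjoint S (univ \ S) := Finset.disjoint_sdiff
  have hvolsplit : (∑ x ∈ S, ∑ y, b x y) + (∑ x ∈ univ \ S, ∑ y, b x y) = vol := by
    rw [add_comm, hvol]
    exact Finset.sum_sdiff (Finset.subset_univ S)
  -- hbar bounds the ratio of S
  have hmem : 2 * fS / vol ∈ {r : F | ∃ V1 V2 : Finset V, V1.Nonempty ∧ V2.Nonempty ∧
      Disjoint V1 V2 ∧
      r = 2 * (∑ x ∈ V1, ∑ y ∈ V2, b x y) /
        ((∑ x ∈ V1, ∑ y, b x y) + (∑ x ∈ V2, ∑ y, b x y))} := by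
    exact ⟨S, univ \ S, hSne, hScne, hdisj, by rw [hvolsplit, ← hfS]⟩
  have hle := hmax.2 hmem
  refine le_trans ?_ hle
  -- final algebra
  have hknat : (m + 1 : F) * c2 = 2 * (2 * (m : F) + 1) * c1 := by
    have := choose_id m
    have hcast := congrArg (fun n : ℕ => (n : F)) this
    push_cast at hcast
    rw [hc2, hc1]
    push_cast
    rw [show 2 * K = 2 * m + 2 by omega, hKdef]
    push_cast
    linarith [hcast]
  have hkey : (m + 1 : F) * vol ≤ 2 * (2 * (m : F) + 1) * fS := by
    have h2 : (2 * (2 * (m : F) + 1)) * (c1 * vol) ≤ (2 * (2 * (m : F) + 1)) * (c2 * fS) := by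
      apply mul_le_mul_of_nonneg_left hSavg
      positivity
    have h3 : c2 * ((m + 1 : F) * vol) ≤ c2 * (2 * (2 * (m : F) + 1) * fS) := by
      nlinarith [h2, hknat]
    exact le_of_mul_le_mul_left h3 hc2pos
  have hNcast : ((2 * K : ℕ) : F) = 2 * (m : F) + 2 := by push_cast [hKdef]; ring
  have hmpos : (0:F) ≤ (m:F) := Nat.cast_nonneg m
  rw [hNcast, div_le_div_iff₀ (by nlinarith) (by positivity)]
  nlinarith [hkey]
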